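/- Let F be a homogeneous locally finite object in C which is universal for C_fin. If C_fin has the Ramsey property, then for every k ≥ 2, every A ∈ C_fin, every e ∈ hom(A,F), every finite subset H of G = Aut(F), and every k-coloring f̄ : G → k which is constant on left cosets of the stabilizer G_(e) = { g ∈ G : g∘e = e }, there exists g ∈ G such that f̄ is constant on g·H. -/

import Mathlib

open CategoryTheory

universe v u v' u'

def RamseyArrow (C : Type u) [Category.{v} C] (A B Z : C) (k t : ℕ) : Prop :=
  ∀ χ : (A ⟶ Z) → Fin k, ∃ w : B ⟶ Z,
    (Set.range fun f : A ⟶ B => χ (f ≫ w)).ncard ≤ t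

noncomputable def ramseyDeg (C : Type u) [Category.{v} C] (A : C) : ℕ∞ :=
  sInf {n : ℕ∞ | ∃ m : ℕ, n = (m : ℕ∞) ∧ 1 ≤ m ∧
    ∀ k : ℕ, 2 ≤ k → ∀ B : C, ∃ Z : C, RamseyArrow C A B Z k m}

def SatisfiesC (C : Type u) [Category.{v} C] (Cfin : Set C) : Prop :=
  (∀ {X Y : C} (f : X ⟶ Y), Mono f) ∧
  (∀ A B : C, A ∈ Cfin → B ∈ Cfin → Finite (A ⟶ B)) ∧
  (∀ F : C, ∃ A : C, A ∈ Cfin ∧ Nonempty (A ⟶ F)) ∧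
  (∀ B : C, B ∈ Cfin → {A : C | A ∈ Cfin ∧ Nonempty (A ⟶ B)}.Finite)

def UniversalFor (C : Type u) [Category.{v} C] (F : C) (S : Set C) : Prop :=
  ∀ A ∈ S, Nonempty (A ⟶ F)

def LocallyFiniteFor (C : Type u) [Category.{v} C] (F : C) (S : Set C) : Prop :=
  ∀ (A B : C), A ∈ S → B ∈ S → ∀ (e : A ⟶ F) (f : B ⟶ F),
    ∃ D₀ : C, D₀ ∈ S ∧ ∃ (r : D₀ ⟶ F) (p : A ⟶ D₀) (q : B ⟶ D₀),
      p ≫ r = e ∧ q ≫ r = f ∧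
      ∀ (H : C) (r' : H ⟶ F) (p' : A ⟶ H) (q' : B ⟶ H),
        p' ≫ r' = e → q' ≫ r' = f →
        ∃ s : D₀ ⟶ H, s ≫ r' = r ∧ p ≫ s = p' ∧ q ≫ s = q'

def Homogeneous (C : Type u) [Category.{v} C] (Cfin : Set C) (F : C) : Prop :=
  ∀ A ∈ Cfin, ∀ e₁ e₂ : A ⟶ F, ∃ g : Aut F, e₁ ≫ g.hom = e₂

def RamseyProperty (C : Type u) [Category.{v} C] (Cfin : Set C) : Prop :=
  ∀ k : ℕ, 2 ≤ k → ∀ A ∈ Cfin, ∀ B ∈ Cfin, ∃ Z ∈ Cfin, RamseyArrow C A B Z k 1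

theorem stmt9 {C : Type u} [Category.{v} C] (Cfin : Set C)
    (hsat : SatisfiesC C Cfin) (F : C)
    (hhom : Homogeneous C Cfin F) (hlf : LocallyFiniteFor C F Cfin)
    (huniv : UniversalFor C F Cfin) (hram : RamseyProperty C Cfin) :
    ∀ k : ℕ, 2 ≤ k → ∀ A : C, A ∈ Cfin → ∀ e : A ⟶ F,
      ∀ H : Set (Aut F), H.Finite →
      ∀ fbar : Aut F → Fin k,
        (∀ g g' : Aut F, e ≫ g.hom = e ≫ g'.hom → fbar g = fbar g') →
        ∃ g : Aut F, ∀ h ∈ H, ∀ h' ∈ H, fbar (h ≪≫ g) = fbar (h' ≪≫ g) := by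
  intro k hk A hA e H hH fbar hconst
  classical
  set χ : (A ⟶ F) → Fin k := fun u => fbar (Classical.choose (hhom A hA e u)) with hχdef
  have hχe : ∀ g : Aut F, χ (e ≫ g.hom) = fbar g := fun g =>
    hconst _ g (Classical.choose_spec (hhom A hA e (e ≫ g.hom)))
  have key : ∀ S : Set (Aut F), S.Finite → ∃ B, B ∈ Cfin ∧ ∃ r : B ⟶ F,
      ∀ h ∈ S, ∃ p : A ⟶ B, p ≫ r = e ≫ h.hom := by
    intro S hS
    refine Set.Finite.induction_on S hS ?_ ?_
    · obtain ⟨B, hB, ⟨r⟩⟩ := hsat.2.2.1 F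
      exact ⟨B, hB, r, fun h hh => absurd hh (Set.notMem_empty h)⟩
    · rintro a s hnew hfin ⟨B, hB, r, hr⟩
      obtain ⟨D, hD, r', p, q, hp, hq, -⟩ := hlf A B hA hB (e ≫ a.hom) r
      refine ⟨D, hD, r', ?_⟩
      intro h hh
      rcases hh with rfl | hh
      · exact ⟨p, hp⟩
      · obtain ⟨p', hp'⟩ := hr h hh
        exact ⟨p' ≫ q, by rw [Category.assoc, hq, hp']⟩
  obtain ⟨B, hB, r, hr⟩ := key H hH
  obtain ⟨Z, hZ, hZram⟩ := hram k hk A hA B hB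
  obtain ⟨eZ⟩ := huniv Z hZ
  obtain ⟨w, hw⟩ := hZram (fun f => χ (f ≫ eZ))
  obtain ⟨g, hg⟩ := hhom B hB r (w ≫ eZ)
  refine ⟨g, ?_⟩
  intro h hh h' hh'
  obtain ⟨p, hp⟩ := hr h hh
  obtain ⟨p', hp'⟩ := hr h' hh'
  have hmono : ∀ f f' : A ⟶ B, χ ((f ≫ w) ≫ eZ) = χ ((f' ≫ w) ≫ eZ) := by
    intro f f'
    have hfin : (Set.range fun f : A ⟶ B => χ ((f ≫ w) ≫ eZ)).Finite :=
      Set.toFinite _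
    exact (Set.ncard_le_one hfin).mp hw _ ⟨f, rfl⟩ _ ⟨f', rfl⟩
  have hval : ∀ (hh : Aut F) (ph : A ⟶ B), ph ≫ r = e ≫ hh.hom →
      fbar (hh ≪≫ g) = χ ((ph ≫ w) ≫ eZ) := by
    intro hh ph hph
    have : e ≫ (hh ≪≫ g).hom = (ph ≫ w) ≫ eZ := by
      change e ≫ (hh.hom ≫ g.hom) = _
      rw [← Category.assoc, ← hph, Category.assoc, hg,
        Category.assoc]
    rw [← hχe (hh ≪≫ g), this]
  rw [hval h p hp, hval h' p' hp', hmono p p']
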